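/- arXiv:1404.2516 — 12 statements merged into one kernel-verified Lean document; each statement's English description precedes it below -/
import Mathlib

section
/- If (A, m, α) is a hom-algebra over a commutative ring R and β : A → A is a linear map satisfying β(m(x,y)) = m(β(x), β(y)) for all x, y (a weak morphism), then (A, β∘m, β∘α) is hom-associative whenever (A, m, α) is hom-associative; that is, if m(α(x), m(y,z)) = m(m(x,y), α(z)) for all x,y,z, then (β∘m)((β∘α)(x), (β∘m)(y,z)) = (β∘m)((β∘m)(x,y), (β∘α)(z)) for all x,y,z. -/
/-- Twisting a hom-associative algebra by a weak morphism yields a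
hom-associative algebra. -/
theorem hom_assoc_twist
    {R A : Type*} [CommRing R] [AddCommGroup A] [Module R A]
    (m : A →ₗ[R] A →ₗ[R] A) (α β : A →ₗ[R] A)
    (hβ : ∀ x y : A, β (m x y) = m (β x) (β y))
    (hassoc : ∀ x y z : A, m (α x) (m y z) = m (m x y) (α z)) :
    ∀ x y z : A,
      β (m (β (α x)) (β (m y z))) = β (m (β (m x y)) (β (α z))) := by
  intro x y z
  rw [← hβ, ← hβ, hassoc]
end

section
/- If (A, m, α) is a hom-Lie algebra (i.e., m(x,x)=0 for all x, and the hom-Jacobi identity m(α(x), m(y,z)) + m(α(y), m(z,x)) + m(α(z), m(x,y)) = 0 holds) and β : A → A is a weak morphism, then (A, β∘m, β∘α) is also a hom-Lie algebra. -/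
/-- Twisting a hom-Lie algebra by a weak morphism yields a hom-Lie algebra. -/
theorem hom_lie_twist
    {R A : Type*} [CommRing R] [AddCommGroup A] [Module R A]
    (m : A →ₗ[R] A →ₗ[R] A) (α β : A →ₗ[R] A)
    (hβ : ∀ x y : A, β (m x y) = m (β x) (β y))
    (halt : ∀ x : A, m x x = 0)
    (hjac : ∀ x y z : A,
      m (α x) (m y z) + m (α y) (m z x) + m (α z) (m x y) = 0) :
    (∀ x : A, β (m x x) = 0) ∧
    (∀ x y z : A,
      β (m (β (α x)) (β (m y z))) + β (m (β (α y)) (β (m z x))) +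
        β (m (β (α z)) (β (m x y))) = 0) := by
  constructor
  · intro x; rw [halt, map_zero]
  · intro x y z
    rw [← hβ, ← hβ, ← hβ, ← map_add, ← map_add, ← map_add, ← map_add, hjac,
      map_zero, map_zero]
end

section
/- Let (A, m) be an associative algebra over a commutative ring R and β : A → A an algebra endomorphism. Then (A, β∘m, β) is a multiplicative hom-associative algebra: (β∘m)(β(x), (β∘m)(y,z)) = (β∘m)((β∘m)(x,y), β(z)) and β((β∘m)(x,y)) = (β∘m)(β(x), β(y)) for all x,y,z ∈ A. -/
/-- An associative algebra twisted by an algebra endomorphism β gives a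
multiplicative hom-associative algebra (A, β∘m, β). -/
theorem assoc_twist_hom_assoc
    {R A : Type*} [CommRing R] [AddCommGroup A] [Module R A]
    (m : A →ₗ[R] A →ₗ[R] A) (β : A →ₗ[R] A)
    (hassoc : ∀ x y z : A, m x (m y z) = m (m x y) z)
    (hβ : ∀ x y : A, β (m x y) = m (β x) (β y)) :
    (∀ x y z : A, β (m (β x) (β (m y z))) = β (m (β (m x y)) (β z))) ∧
    (∀ x y : A, β (β (m x y)) = β (m (β x) (β y))) := by
  constructor
  · intro x y z
    simp only [hβ, hassoc]
  · intro x y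
    rw [hβ]
end

section
/- Let (A, m, α) be a multiplicative hom-associative algebra in which α is bijective with linear inverse α⁻¹. Then the multiplication m' := α⁻¹ ∘ m is associative: m'(x, m'(y,z)) = m'(m'(x,y), z) for all x,y,z ∈ A. -/
/-- In a multiplicative hom-associative algebra with invertible α, the
multiplication α⁻¹ ∘ m is associative. -/
theorem inv_twist_assoc
    {R A : Type*} [CommRing R] [AddCommGroup A] [Module R A]
    (m : A →ₗ[R] A →ₗ[R] A) (α αinv : A →ₗ[R] A)
    (hinv₁ : ∀ x : A, αinv (α x) = x)
    (hinv₂ : ∀ x : A, α (αinv x) = x)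
    (hassoc : ∀ x y z : A, m (α x) (m y z) = m (m x y) (α z))
    (hmult : ∀ x y : A, α (m x y) = m (α x) (α y)) :
    ∀ x y z : A,
      αinv (m x (αinv (m y z))) = αinv (m (αinv (m x y)) z) := by
  have hinvmult : ∀ x y : A, αinv (m x y) = m (αinv x) (αinv y) := by
    intro x y
    have := hmult (αinv x) (αinv y)
    rw [hinv₂, hinv₂] at this
    rw [← this, hinv₁]
  intro x y z
  congr 1
  calc m x (αinv (m y z)) = m (α (αinv x)) (m (αinv y) (αinv z)) := by
        rw [hinv₂, hinvmult]
    _ = m (m (αinv x) (αinv y)) (α (αinv z)) := hassoc _ _ _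
    _ = m (αinv (m x y)) z := by rw [hinv₂, hinvmult]
end

section
/- Let (A, m, α) be a hom-associative algebra that possesses a classical two-sided unit e, i.e., m(e,x) = x = m(x,e) for all x ∈ A. Then for all x, y ∈ A: m(α(x), y) = m(x, α(y)) = α(m(x,y)). -/
/-- In a hom-associative algebra with a classical two-sided unit, α lies in
the centroid. -/
theorem unital_hom_assoc_centroid
    {R A : Type*} [CommRing R] [AddCommGroup A] [Module R A]
    (m : A →ₗ[R] A →ₗ[R] A) (α : A →ₗ[R] A)
    (hassoc : ∀ x y z : A, m (α x) (m y z) = m (m x y) (α z))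
    (e : A) (he₁ : ∀ x : A, m e x = x) (he₂ : ∀ x : A, m x e = x) :
    ∀ x y : A, m (α x) y = m x (α y) ∧ m x (α y) = α (m x y) := by
  have hc1 : ∀ w : A, m w (α e) = α w := by
    intro w
    have := hassoc w e e
    simpa [he₁, he₂] using this.symm
  have hc2 : ∀ w : A, m (α e) w = α w := by
    intro w
    have := hassoc e e w
    simpa [he₁, he₂] using this
  have h1 : ∀ x y : A, m x (α y) = α (m x y) := by
    intro x y
    have := hassoc e x y
    simpa [he₁, hc2] using this.symm
  have h2 : ∀ x y : A, m (α x) y = α (m x y) := by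
    intro x y
    have := hassoc x y e
    simpa [he₂, hc1] using this
  intro x y
  exact ⟨(h2 x y).trans (h1 x y).symm, h1 x y⟩
end

section
/- In a hom-associative algebra with classical unit e (so m(e,x)=x=m(x,e)), the map α lies in the centroid and moreover any product of elements containing α in any factor can be 'moved': m(α(x), m(y,z)) = α(m(x, m(y,z))) = m(m(x,y), α(z)) for all x,y,z. -/
/-- In a hom-associative algebra with classical unit, α is in the centroid and
applications of α can be moved around freely in products. -/
theorem unital_hom_assoc_alpha_moves
    {R A : Type*} [CommRing R] [AddCommGroup A] [Module R A]
    (m : A →ₗ[R] A →ₗ[R] A) (α : A →ₗ[R] A)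
    (hassoc : ∀ x y z : A, m (α x) (m y z) = m (m x y) (α z))
    (e : A) (he₁ : ∀ x : A, m e x = x) (he₂ : ∀ x : A, m x e = x) :
    (∀ x y : A, α (m x y) = m (α x) y ∧ α (m x y) = m x (α y)) ∧
    (∀ x y z : A,
      m (α x) (m y z) = α (m x (m y z)) ∧
      α (m x (m y z)) = m (m x y) (α z)) := by
  -- m (α x) z = m x (α z)
  have key : ∀ x z : A, m (α x) z = m x (α z) := by
    intro x z
    have h := hassoc x e z
    rwa [he₁, he₂] at h
  -- α x = m (α e) x
  have hαe : ∀ x : A, α x = m (α e) x := by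
    intro x
    rw [key, he₁]
  have cent : ∀ x y : A, α (m x y) = m (α x) y ∧ α (m x y) = m x (α y) := by
    intro x y
    have h1 : α (m x y) = m x (α y) := by
      rw [hαe (m x y)]
      have h := hassoc e x y
      rwa [he₁] at h
    exact ⟨h1.trans (key x y).symm, h1⟩
  refine ⟨cent, fun x y z => ?_⟩
  have h1 : m (α x) (m y z) = α (m x (m y z)) := ((cent x (m y z)).1).symm
  exact ⟨h1, h1.symm.trans (hassoc x y z)⟩
end

section
/- Let (A, m) be an associative algebra and α an element of its centroid, i.e., α(m(x,y)) = m(α(x), y) = m(x, α(y)) for all x,y. Define m₁(x,y) = m(α(x), y). Then (A, m₁, α) is a hom-associative algebra: m₁(α(x), m₁(y,z)) = m₁(m₁(x,y), α(z)) for all x,y,z. -/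
/-- For α in the centroid of an associative algebra, m₁(x,y) = m(α x, y)
gives a hom-associative algebra (A, m₁, α). -/
theorem centroid_twist_one
    {R A : Type*} [CommRing R] [AddCommGroup A] [Module R A]
    (m : A →ₗ[R] A →ₗ[R] A) (α : A →ₗ[R] A)
    (hassoc : ∀ x y z : A, m x (m y z) = m (m x y) z)
    (hcent₁ : ∀ x y : A, α (m x y) = m (α x) y)
    (hcent₂ : ∀ x y : A, α (m x y) = m x (α y)) :
    ∀ x y z : A,
      m (α (α x)) (m (α y) z) = m (α (m (α x) y)) (α z) := by
  intro x y z
  rw [hcent₁, ← hcent₂, ← hassoc, hcent₂, hcent₁]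
end

section
/- Let (A, m) be an associative algebra and α an element of its centroid. Define m₂(x,y) = m(α(x), α(y)). Then (A, m₂, α) is a hom-associative algebra: m₂(α(x), m₂(y,z)) = m₂(m₂(x,y), α(z)) for all x,y,z. -/
/-- For α in the centroid of an associative algebra, m₂(x,y) = m(α x, α y)
gives a hom-associative algebra (A, m₂, α). -/
theorem centroid_twist_two
    {R A : Type*} [CommRing R] [AddCommGroup A] [Module R A]
    (m : A →ₗ[R] A →ₗ[R] A) (α : A →ₗ[R] A)
    (hassoc : ∀ x y z : A, m x (m y z) = m (m x y) z)
    (hcent₁ : ∀ x y : A, α (m x y) = m (α x) y)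
    (hcent₂ : ∀ x y : A, α (m x y) = m x (α y)) :
    ∀ x y z : A,
      m (α (α x)) (α (m (α y) (α z))) = m (α (m (α x) (α y))) (α (α z)) := by
  intro x y z
  rw [hcent₂, hcent₁, hassoc]
end

section
/- Every hom-associative algebra is hom-Lie-admissible: if (A, m, α) is hom-associative and b(x,y) := m(x,y) − m(y,x), then (A, b, α) satisfies b(x,x) = 0 and the hom-Jacobi identity b(α(x), b(y,z)) + b(α(y), b(z,x)) + b(α(z), b(x,y)) = 0 for all x,y,z ∈ A. -/
/-- Every hom-associative algebra is hom-Lie admissible. -/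
theorem hom_assoc_hom_lie_admissible
    {R A : Type*} [CommRing R] [AddCommGroup A] [Module R A]
    (m : A →ₗ[R] A →ₗ[R] A) (α : A →ₗ[R] A)
    (hassoc : ∀ x y z : A, m (α x) (m y z) = m (m x y) (α z))
    (b : A → A → A) (hb : ∀ x y : A, b x y = m x y - m y x) :
    (∀ x : A, b x x = 0) ∧
    (∀ x y z : A, b (α x) (b y z) + b (α y) (b z x) + b (α z) (b x y) = 0) := by
  constructor
  · intro x; rw [hb, sub_self]
  · intro x y z
    simp only [hb, map_sub, LinearMap.sub_apply]
    have h1 := hassoc x y z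
    have h2 := hassoc y z x
    have h3 := hassoc z x y
    have h4 := hassoc x z y
    have h5 := hassoc y x z
    have h6 := hassoc z y x
    abel_nf
    linear_combination (norm := abel) h1 + h2 + h3 - h4 - h5 - h6
end

section
/- Let K be a field and q ∈ K with 2 invertible in K. On the 3-dimensional vector space with basis e, f, h, define the skew-symmetric bracket by [h,f] = −2q·f, [h,e] = 2·e, [e,f] = (1/2)(1+q)·h, and the linear map α by α(e) = q·e, α(f) = q²·f, α(h) = q·h. Then (span{e,f,h}, [·,·], α) is a hom-Lie algebra: the bracket is alternating and satisfies the hom-Jacobi identity [α(x),[y,z]] + [α(y),[z,x]] + [α(z),[x,y]] = 0 for all x,y,z. -/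
/-- The q-deformed sl₂: coordinates x = x₀e + x₁f + x₂h, with
[h,f] = -2q f, [h,e] = 2e, [e,f] = ½(1+q)h and α(e)=qe, α(f)=q²f, α(h)=qh,
form a hom-Lie algebra. -/
theorem q_deformed_sl2_hom_lie
    {K : Type*} [Field K] (q : K) (h2 : (2 : K) ≠ 0)
    (br : (Fin 3 → K) → (Fin 3 → K) → (Fin 3 → K))
    (hbr : ∀ x y : Fin 3 → K, br x y =
      ![-2 * (x 0 * y 2 - x 2 * y 0),
        2 * q * (x 1 * y 2 - x 2 * y 1),
        (1/2) * (1 + q) * (x 0 * y 1 - x 1 * y 0)])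
    (α : (Fin 3 → K) → (Fin 3 → K))
    (hα : ∀ x : Fin 3 → K, α x = ![q * x 0, q^2 * x 1, q * x 2]) :
    (∀ x : Fin 3 → K, br x x = 0) ∧
    (∀ x y z : Fin 3 → K,
      br (α x) (br y z) + br (α y) (br z x) + br (α z) (br x y) = 0) := by
  constructor
  · intro x
    rw [hbr]
    funext i
    fin_cases i <;> simp [sub_eq_zero, mul_comm]
  · intro x y z
    simp only [hbr, hα]
    funext i
    fin_cases i <;> simp [Matrix.cons_val_zero, Matrix.cons_val_one] <;> ring
end

section
/- Let K be a field, a, b ∈ K, and A = K³ with basis e₁, e₂, e₃. Define a bilinear multiplication m by m(e₁,e₁)=a·e₁, m(e₂,e₂)=a·e₂, m(e₁,e₂)=m(e₂,e₁)=a·e₂, m(e₂,e₃)=b·e₃, m(e₁,e₃)=m(e₃,e₁)=b·e₃, m(e₃,e₂)=m(e₃,e₃)=0, and linear α by α(e₁)=a·e₁, α(e₂)=a·e₂, α(e₃)=b·e₃. Then (A, m, α) is a hom-associative algebra: m(α(x), m(y,z)) = m(m(x,y), α(z)) for all x,y,z ∈ A. -/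
/-- The 3-dimensional hom-associative algebra of Example 1: with the
multiplication m(e₁,e₁)=a e₁, m(e₂,e₂)=a e₂, m(e₁,e₂)=m(e₂,e₁)=a e₂,
m(e₂,e₃)=m(e₁,e₃)=m(e₃,e₁)=b e₃, m(e₃,e₂)=m(e₃,e₃)=0 and
α(e₁)=a e₁, α(e₂)=a e₂, α(e₃)=b e₃, one has hom-associativity. -/
theorem example_hom_associative
    {K : Type*} [Field K] (a b : K)
    (m : (Fin 3 → K) → (Fin 3 → K) → (Fin 3 → K))
    (hm : ∀ x y : Fin 3 → K, m x y =
      ![a * (x 0 * y 0),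
        a * (x 0 * y 1 + x 1 * y 0 + x 1 * y 1),
        b * (x 0 * y 2 + x 1 * y 2 + x 2 * y 0)])
    (α : (Fin 3 → K) → (Fin 3 → K))
    (hα : ∀ x : Fin 3 → K, α x = ![a * x 0, a * x 1, b * x 2]) :
    ∀ x y z : Fin 3 → K, m (α x) (m y z) = m (m x y) (α z) := by
  intro x y z
  simp only [hm, hα]
  funext i
  fin_cases i <;> simp only [Matrix.cons_val_zero, Matrix.cons_val_one, Matrix.head_cons, Matrix.cons_val_two, Matrix.tail_cons, Fin.isValue] <;> ring
end

section
/- With the hom-associative algebra of the previous example (A = K³ with the multiplication m determined by m(e₁,e₁)=a·e₁ etc.), if a ≠ b and b ≠ 0 then m is not associative; specifically m(m(e₁,e₁), e₃) − m(e₁, m(e₁,e₃)) = (a−b)·b·e₃ ≠ 0. -/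
/-- The hom-associative algebra of Example 1 is not associative when
a ≠ b and b ≠ 0. -/
theorem example_not_associative
    {K : Type*} [Field K] (a b : K) (hab : a ≠ b) (hb : b ≠ 0)
    (m : (Fin 3 → K) → (Fin 3 → K) → (Fin 3 → K))
    (hm : ∀ x y : Fin 3 → K, m x y =
      ![a * (x 0 * y 0),
        a * (x 0 * y 1 + x 1 * y 0 + x 1 * y 1),
        b * (x 0 * y 2 + x 1 * y 2 + x 2 * y 0)]) :
    m (m ![1,0,0] ![1,0,0]) ![0,0,1] - m ![1,0,0] (m ![1,0,0] ![0,0,1])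
        = ((a - b) * b) • (![0,0,1] : Fin 3 → K) ∧
    ((a - b) * b) • (![0,0,1] : Fin 3 → K) ≠ 0 := by
  constructor
  · simp only [hm]
    funext i
    fin_cases i <;> simp [Matrix.cons_val_zero, Matrix.cons_val_one] <;> ring
  · intro h
    have := congrFun h 2
    simp [Matrix.cons_val_zero] at this
    rcases this with h1 | h2
    · exact hab (sub_eq_zero.mp h1)
    · exact hb h2
end
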